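/- Let G be a connected graph and let T be a connecting transition set of G. Then there exists a connecting hypergraph H of G with cost(H) = Σ_{E ∈ H} (|E| − 2) at most |T|. -/

import Mathlib

variable {V : Type*}

/-- The transition consisting of the edges `ab` and `bc`, written `abc`. -/
def transitionOf (a b c : V) : Sym2 (Sym2 V) := s(s(a, b), s(b, c))

/-- `t` is a transition of `G`: an unordered pair of two distinct adjacent edges. -/
def SimpleGraph.IsTransition (G : SimpleGraph V) (t : Sym2 (Sym2 V)) : Prop :=
  ∃ a b c, G.Adj a b ∧ G.Adj b c ∧ a ≠ c ∧ t = transitionOf a b c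

/-- A list of vertices (the support of a walk) is `T`-compatible: every pair of
consecutive edges is either a transition of `T` or a backtrack. -/
def TCompatible (T : Set (Sym2 (Sym2 V))) (l : List V) : Prop :=
  ∀ (i : ℕ) (h : i + 2 < l.length),
    l[i]'(by omega) = l[i + 2]'h ∨
    transitionOf (l[i]'(by omega)) (l[i + 1]'(by omega)) (l[i + 2]'h) ∈ T

/-- `G` is `T`-connected: every two vertices are joined by a `T`-compatible walk. -/
def SimpleGraph.TConnected (G : SimpleGraph V) (T : Set (Sym2 (Sym2 V))) : Prop :=
  ∀ u v : V, ∃ p : G.Walk u v, TCompatible T p.support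

/-- `T` is a connecting transition set of `G`. -/
def SimpleGraph.ConnectingTransitionSet (G : SimpleGraph V)
    (T : Finset (Sym2 (Sym2 V))) : Prop :=
  (∀ t ∈ T, G.IsTransition t) ∧ G.TConnected ↑T

/-- `H` is a connecting hypergraph of `G`: every hyperedge has at least two vertices and
induces a connected subgraph, and every pair of distinct non-adjacent vertices is
contained in a common hyperedge. -/
def SimpleGraph.ConnectingHypergraph (G : SimpleGraph V) (H : Finset (Finset V)) : Prop :=
  (∀ E ∈ H, 2 ≤ E.card ∧ (G.induce (E : Set V)).Connected) ∧
  ∀ u v : V, u ≠ v → ¬G.Adj u v → ∃ E ∈ H, u ∈ E ∧ v ∈ E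

/-- The cost of a hypergraph: the sum over hyperedges of (size − 2). -/
def hcost (H : Finset (Finset V)) : ℕ := ∑ E ∈ H, (E.card - 2)

/-- The quantity τ(G): the sum over co-connected components `C` of `G` with `|C| ≥ 2`
of `|C| − 2` if `G[C]` is connected and `|C| − 1` otherwise. -/
noncomputable def tau {V : Type*} [Fintype V] (G : SimpleGraph V) : ℕ := by
  classical
  haveI : Fintype Gᶜ.ConnectedComponent := Fintype.ofFinite _
  exact ∑ C : Gᶜ.ConnectedComponent,
    if 2 ≤ C.supp.ncard then
      (if (G.induce C.supp).Connected then C.supp.ncard - 2 else C.supp.ncard - 1)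
    else 0

namespace StmtAux

open SimpleGraph

/-- A connected finite graph has at least `card - 1` edges. -/
theorem conn_card_le {α : Type*} [Fintype α] (Γ : SimpleGraph α) [Nonempty α]
    (h : Γ.Preconnected) : Fintype.card α ≤ Γ.edgeSet.ncard + 1 := by
  classical
  obtain ⟨r⟩ := ‹Nonempty α›
  have key : ∀ v, v ≠ r → ∃ u, Γ.Adj v u ∧ Γ.dist u r < Γ.dist v r := by
    intro v hv
    obtain ⟨p, hp⟩ := (h v r).exists_walk_length_eq_dist
    cases p with
    | nil => exact absurd rfl hv
    | @cons _ w _ h' q =>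
        refine ⟨w, h', ?_⟩
        have h1 := Γ.dist_le q
        rw [← hp]
        simp only [Walk.length_cons]
        omega
  choose! u hadj hdist using key
  have hmaps : ∀ v ∈ {v | v ≠ r}, s(v, u v) ∈ Γ.edgeSet := by
    intro v hv
    exact (hadj v hv)
  have hinj : Set.InjOn (fun v => s(v, u v)) {v | v ≠ r} := by
    intro v hv w hw hvw
    simp only [Sym2.eq, Sym2.rel_iff', Prod.mk.injEq, Prod.swap_prod_mk] at hvw
    rcases hvw with ⟨h1, _⟩ | ⟨h1, h2⟩
    · exact h1
    · have d1 := hdist v hv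
      have d2 := hdist w hw
      rw [← h1] at d2
      rw [h2] at d1
      omega
  have hcard := Set.ncard_le_ncard_of_injOn _ hmaps hinj (Set.toFinite _)
  have hco : ({v | v ≠ r} : Set α) = {r}ᶜ := by ext x; simp
  have := Set.ncard_add_ncard_compl ({r} : Set α)
  rw [Set.ncard_singleton] at this
  rw [hco] at hcard
  rw [Nat.card_eq_fintype_card] at this
  omega

/-- The transition graph: vertices are (potential) edges of `G`, two edges adjacent when they
form a transition in `T`. -/
def transGraph (T : Finset (Sym2 (Sym2 V))) : SimpleGraph (Sym2 V) where
  Adj e f := e ≠ f ∧ s(e, f) ∈ T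
  symm := by
    constructor
    intro e f h
    exact ⟨h.1.symm, by rw [Sym2.eq_swap]; exact h.2⟩
  loopless := by constructor; intro e h; exact h.1 rfl

/-- The graph on `V` whose edges are the elements of `S` which are edges of `G`. -/
def midGraph (G : SimpleGraph V) (S : Set (Sym2 V)) : SimpleGraph V where
  Adj u v := u ≠ v ∧ s(u, v) ∈ S ∧ s(u, v) ∈ G.edgeSet
  symm := by
    constructor
    intro u v h
    refine ⟨h.1.symm, ?_, ?_⟩
    · rw [Sym2.eq_swap]; exact h.2.1
    · rw [Sym2.eq_swap]; exact h.2.2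
  loopless := by constructor; intro u h; exact h.1 rfl

lemma transGraph_adj {G : SimpleGraph V} {T : Finset (Sym2 (Sym2 V))}
    (hT : ∀ t ∈ T, G.IsTransition t) {e f : Sym2 V} (h : (transGraph T).Adj e f) :
    ∃ b, b ∈ e ∧ b ∈ f ∧ e ∈ G.edgeSet ∧ f ∈ G.edgeSet := by
  obtain ⟨hne, hmem⟩ := h
  obtain ⟨a, b, c, hab, hbc, hac, ht⟩ := hT _ hmem
  rw [transitionOf, Sym2.eq_iff] at ht
  rcases ht with ⟨h1, h2⟩ | ⟨h1, h2⟩ <;> subst h1 <;> subst h2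
  · exact ⟨b, Sym2.mem_mk_right a b, Sym2.mem_mk_left b c,
      G.mem_edgeSet.mpr hab, G.mem_edgeSet.mpr hbc⟩
  · exact ⟨b, Sym2.mem_mk_left b c, Sym2.mem_mk_right a b,
      G.mem_edgeSet.mpr hbc, G.mem_edgeSet.mpr hab⟩

lemma edge_two_mem {G : SimpleGraph V} {e : Sym2 V} (he : e ∈ G.edgeSet) :
    ∃ x y, x ≠ y ∧ x ∈ e ∧ y ∈ e := by
  revert he
  induction e using Sym2.ind with
  | _ x y =>
    intro he
    exact ⟨x, y, G.ne_of_adj (G.mem_edgeSet.mp he), Sym2.mem_mk_left x y, Sym2.mem_mk_right x y⟩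

lemma mem_edge_reachable {G : SimpleGraph V} {S : Set (Sym2 V)} {e : Sym2 V}
    (heS : e ∈ S) (heE : e ∈ G.edgeSet) {u v : V} (hu : u ∈ e) (hv : v ∈ e) :
    (midGraph G S).Reachable u v := by
  by_cases huv : u = v
  · subst huv; exact Reachable.refl u
  · have he : e = s(u, v) :=
      Sym2.eq_of_ne_mem huv hu hv (Sym2.mem_mk_left u v) (Sym2.mem_mk_right u v)
    exact Adj.reachable ⟨huv, he ▸ heS, he ▸ heE⟩

lemma walk_reachable {G : SimpleGraph V} {T : Finset (Sym2 (Sym2 V))}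
    (hT : ∀ t ∈ T, G.IsTransition t) (C : (transGraph T).ConnectedComponent) :
    ∀ {e f : Sym2 V}, (transGraph T).Walk e f → e ∈ C.supp → e ∈ G.edgeSet →
      ∀ {u v : V}, u ∈ e → v ∈ f → (midGraph G C.supp).Reachable u v := by
  intro e f p
  induction p with
  | nil =>
    intro heC heE u v hu hv
    exact mem_edge_reachable heC heE hu hv
  | @cons e w f h q ih =>
    intro heC heE u v hu hv
    obtain ⟨b, hbe, hbw, heE', hwE⟩ := transGraph_adj hT h
    have hwC : w ∈ C.supp := by
      rw [ConnectedComponent.mem_supp_iff] at heC ⊢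
      rw [← heC]
      exact ConnectedComponent.eq.mpr (Adj.reachable h).symm
    exact (mem_edge_reachable heC heE hu hbe).trans (ih hwC hwE hbw hv)

lemma reachable_induce {Δ G' : SimpleGraph V} {S : Set V}
    (hsub : ∀ a b, Δ.Adj a b → a ∈ S ∧ b ∈ S ∧ G'.Adj a b) :
    ∀ {u v : V}, Δ.Walk u v → ∀ (hu : u ∈ S) (hv : v ∈ S),
      (G'.induce S).Reachable ⟨u, hu⟩ ⟨v, hv⟩ := by
  intro u v p
  induction p with
  | nil => intro hu hv; exact Reachable.refl _
  | @cons u w v h q ih =>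
    intro hu hv
    obtain ⟨_, hw, hadj⟩ := hsub _ _ h
    exact (Adj.reachable (by exact hadj : (G'.induce S).Adj ⟨u, hu⟩ ⟨w, hw⟩)).trans (ih hw hv)

lemma reachable_induce_supp {α : Type*} {Γ : SimpleGraph α} (C : Γ.ConnectedComponent) :
    ∀ {e f : α}, Γ.Walk e f → ∀ (he : e ∈ C.supp) (hf : f ∈ C.supp),
      (Γ.induce C.supp).Reachable ⟨e, he⟩ ⟨f, hf⟩ := by
  intro e f p
  induction p with
  | nil => intro he hf; exact Reachable.refl _
  | @cons e w f h q ih =>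
    intro he hf
    have hw : w ∈ C.supp := by
      rw [ConnectedComponent.mem_supp_iff] at he ⊢
      rw [← he]
      exact ConnectedComponent.eq.mpr (Adj.reachable h).symm
    exact (Adj.reachable (by exact h : (Γ.induce C.supp).Adj ⟨e, he⟩ ⟨w, hw⟩)).trans (ih hw hf)

lemma edge_inj_bound {α : Type*} {S : Set α} {Δ : SimpleGraph ↥S} {t : Set (Sym2 α)}
    (hmap : ∀ a b : ↥S, Δ.Adj a b → s((a : α), (b : α)) ∈ t) (ht : t.Finite) :
    Δ.edgeSet.ncard ≤ t.ncard := by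
  refine Set.ncard_le_ncard_of_injOn (Sym2.map Subtype.val) ?_ ?_ ht
  · intro x
    induction x using Sym2.ind with
    | _ a b =>
      intro hx
      rw [SimpleGraph.mem_edgeSet] at hx
      simpa using hmap a b hx
  · exact (Sym2.map.injective Subtype.val_injective).injOn

lemma sum_image_le_nat {α β : Type*} [DecidableEq β] (s : Finset α) (F : α → β) (g : β → ℕ) :
    ∑ E ∈ s.image F, g E ≤ ∑ C ∈ s, g (F C) := by
  classical
  induction s using Finset.induction_on with
  | empty => simp
  | @insert a s ha ih =>
    rw [Finset.image_insert, Finset.sum_insert ha]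
    by_cases hF : F a ∈ s.image F
    · rw [Finset.insert_eq_self.mpr hF]
      exact le_trans ih (Nat.le_add_left _ _)
    · rw [Finset.sum_insert hF]
      exact Nat.add_le_add_left ih _

lemma sum_filter_card_le {α β : Type*} [DecidableEq β] (s : Finset α) (T : Finset β)
    (p : α → β → Prop) [∀ a, DecidablePred (p a)]
    (hdis : ∀ a ∈ s, ∀ b ∈ s, a ≠ b → ∀ t ∈ T, p a t → p b t → False) :
    ∑ C ∈ s, (T.filter (p C)).card ≤ T.card := by
  classical
  rw [← Finset.card_biUnion]
  · exact Finset.card_le_card (Finset.biUnion_subset.mpr fun C _ => Finset.filter_subset _ _)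
  · intro a ha b hb hab
    rw [Function.onFun, Finset.disjoint_left]
    intro t hta htb
    rw [Finset.mem_filter] at hta htb
    exact hdis a ha b hb hab t hta.1 hta.2 htb.2

end StmtAux

namespace StmtAux

open SimpleGraph

variable [Fintype V] [DecidableEq V]

/-- The hyperedge associated to a component of the transition graph. -/
noncomputable def hypF (G : SimpleGraph V) (T : Finset (Sym2 (Sym2 V)))
    (C : (transGraph T).ConnectedComponent) : Finset V :=
  Set.Finite.toFinset (Set.toFinite {v : V | ∃ e, e ∈ C.supp ∧ v ∈ e ∧ e ∈ G.edgeSet})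

lemma mem_hypF {G : SimpleGraph V} {T : Finset (Sym2 (Sym2 V))}
    {C : (transGraph T).ConnectedComponent} {v : V} :
    v ∈ hypF G T C ↔ ∃ e, e ∈ C.supp ∧ v ∈ e ∧ e ∈ G.edgeSet :=
  Set.Finite.mem_toFinset _

lemma midGraph_sub {G : SimpleGraph V} {T : Finset (Sym2 (Sym2 V))}
    (C : (transGraph T).ConnectedComponent) :
    ∀ a b, (midGraph G C.supp).Adj a b →
      a ∈ (hypF G T C : Set V) ∧ b ∈ (hypF G T C : Set V) ∧ G.Adj a b := by
  intro a b h
  obtain ⟨hne, hS, hE⟩ := h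
  refine ⟨?_, ?_, G.mem_edgeSet.mp hE⟩
  · exact Finset.mem_coe.mpr (mem_hypF.mpr ⟨s(a, b), hS, Sym2.mem_mk_left a b, hE⟩)
  · exact Finset.mem_coe.mpr (mem_hypF.mpr ⟨s(a, b), hS, Sym2.mem_mk_right a b, hE⟩)

lemma hypF_reach {G : SimpleGraph V} {T : Finset (Sym2 (Sym2 V))}
    (hT : ∀ t ∈ T, G.IsTransition t) (C : (transGraph T).ConnectedComponent) :
    ∀ a ∈ hypF G T C, ∀ b ∈ hypF G T C, (midGraph G C.supp).Reachable a b := by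
  intro a ha b hb
  obtain ⟨ea, heaC, haea, heaE⟩ := mem_hypF.mp ha
  obtain ⟨eb, hebC, hbeb, _⟩ := mem_hypF.mp hb
  have hr : (transGraph T).Reachable ea eb := by
    rw [ConnectedComponent.mem_supp_iff] at heaC hebC
    exact ConnectedComponent.eq.mp (heaC.trans hebC.symm)
  obtain ⟨p⟩ := hr
  exact walk_reachable hT C p heaC heaE haea hbeb

lemma hypF_two {G : SimpleGraph V} {T : Finset (Sym2 (Sym2 V))}
    (hT : ∀ t ∈ T, G.IsTransition t) {C : (transGraph T).ConnectedComponent}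
    (hCs : ∃ e f, e ∈ C.supp ∧ (transGraph T).Adj e f) :
    ∃ x ∈ hypF G T C, ∃ y ∈ hypF G T C, x ≠ y := by
  obtain ⟨e, f, heC, hadj⟩ := hCs
  obtain ⟨b, hbe, hbf, heE, hfE⟩ := transGraph_adj hT hadj
  obtain ⟨x, y, hxy, hx, hy⟩ := edge_two_mem heE
  exact ⟨x, mem_hypF.mpr ⟨e, heC, hx, heE⟩, y, mem_hypF.mpr ⟨e, heC, hy, heE⟩, hxy⟩

/-- The component predicate used to partition `T`. -/
def compPred (T : Finset (Sym2 (Sym2 V))) (C : (transGraph T).ConnectedComponent)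
    (t : Sym2 (Sym2 V)) : Prop :=
  ∀ x ∈ t, (transGraph T).connectedComponentMk x = C

open scoped Classical in
lemma hypF_card_le {G : SimpleGraph V} {T : Finset (Sym2 (Sym2 V))}
    (hT : ∀ t ∈ T, G.IsTransition t) {C : (transGraph T).ConnectedComponent}
    (hCs : ∃ e f, e ∈ C.supp ∧ (transGraph T).Adj e f) :
    (hypF G T C).card ≤
      (T.filter (fun t => ∀ x ∈ t, (transGraph T).connectedComponentMk x = C)).card + 2 := by
  classical
  obtain ⟨e₀, f₀, he₀C, hadj₀⟩ := hCs
  -- Step A : |hypF| ≤ ncard (C.supp ∩ G.edgeSet) + 1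
  have hA : (hypF G T C).card ≤ (C.supp ∩ G.edgeSet).ncard + 1 := by
    have hne : Nonempty ↥((hypF G T C : Set V)) := by
      obtain ⟨x, hx, -, -, -⟩ := hypF_two hT ⟨e₀, f₀, he₀C, hadj₀⟩
      exact ⟨⟨x, Finset.mem_coe.mpr hx⟩⟩
    have hpre : ((midGraph G C.supp).induce (hypF G T C : Set V)).Preconnected := by
      rintro ⟨a, ha⟩ ⟨b, hb⟩
      have hr := hypF_reach hT C a (Finset.mem_coe.mp ha) b (Finset.mem_coe.mp hb)
      obtain ⟨p⟩ := hr
      exact reachable_induce (fun x y h => (midGraph_sub C x y h).imp id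
        (fun h' => ⟨h'.1, h⟩)) p ha hb
    have hcard := conn_card_le _ hpre
    have hcc : Fintype.card ↥((hypF G T C : Set V)) = (hypF G T C).card := by
      rw [← Nat.card_eq_fintype_card, Nat.card_coe_set_eq, Set.ncard_coe_finset]
    rw [hcc] at hcard
    refine le_trans hcard (Nat.add_le_add_right ?_ 1)
    refine edge_inj_bound ?_ (Set.toFinite _)
    intro a b h
    exact ⟨h.2.1, h.2.2⟩
  -- Step B : ncard C.supp ≤ |T_C| + 1
  have hB : C.supp.ncard ≤
      (T.filter (fun t => ∀ x ∈ t, (transGraph T).connectedComponentMk x = C)).card + 1 := by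
    have hne : Nonempty ↥(C.supp) := ⟨⟨e₀, he₀C⟩⟩
    have hpre : ((transGraph T).induce C.supp).Preconnected := by
      rintro ⟨a, ha⟩ ⟨b, hb⟩
      have hr : (transGraph T).Reachable a b := by
        rw [ConnectedComponent.mem_supp_iff] at ha hb
        exact ConnectedComponent.eq.mp (ha.trans hb.symm)
      obtain ⟨p⟩ := hr
      exact reachable_induce_supp C p ha hb
    have hcard := conn_card_le _ hpre
    have hcc : Fintype.card ↥(C.supp) = C.supp.ncard := by
      rw [← Nat.card_eq_fintype_card, Nat.card_coe_set_eq]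
    rw [hcc] at hcard
    refine le_trans hcard (Nat.add_le_add_right ?_ 1)
    have hmap : ∀ a b : ↥(C.supp), ((transGraph T).induce C.supp).Adj a b →
        s((a : Sym2 V), (b : Sym2 V)) ∈
          ((T.filter (fun t => ∀ x ∈ t, (transGraph T).connectedComponentMk x = C)) :
            Set (Sym2 (Sym2 V))) := by
      rintro ⟨a, ha⟩ ⟨b, hb⟩ h
      have hadj : (transGraph T).Adj a b := h
      rw [Finset.mem_coe, Finset.mem_filter]
      refine ⟨hadj.2, ?_⟩
      intro x hx
      rw [Sym2.mem_iff] at hx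
      rw [ConnectedComponent.mem_supp_iff] at ha hb
      rcases hx with rfl | rfl
      · exact ha
      · exact hb
    have := edge_inj_bound hmap (Set.toFinite _)
    rwa [Set.ncard_coe_finset] at this
  have hAB : (C.supp ∩ G.edgeSet).ncard ≤ C.supp.ncard :=
    Set.ncard_le_ncard Set.inter_subset_left (Set.toFinite _)
  omega

end StmtAux

open StmtAux SimpleGraph

/-- From a connecting transition set `T` of a connected graph `G` one can obtain a
connecting hypergraph of `G` of cost at most `|T|`. -/
theorem stmt6 {V : Type*} [Fintype V] [DecidableEq V] (G : SimpleGraph V)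
    (hc : G.Connected) (T : Finset (Sym2 (Sym2 V))) (hT : G.ConnectingTransitionSet T) :
    ∃ H : Finset (Finset V), G.ConnectingHypergraph H ∧ hcost H ≤ T.card := by
  classical
  haveI : Fintype (transGraph (V := V) T).ConnectedComponent := Fintype.ofFinite _
  set s : Finset (transGraph (V := V) T).ConnectedComponent :=
    Finset.univ.filter (fun C => ∃ e f, e ∈ C.supp ∧ (transGraph T).Adj e f) with hs
  have hmemS : ∀ C, C ∈ s ↔ ∃ e f, e ∈ C.supp ∧ (transGraph T).Adj e f := by
    intro C
    rw [hs, Finset.mem_filter]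
    simp
  refine ⟨s.image (hypF G T), ⟨?_, ?_⟩, ?_⟩
  · -- each hyperedge is large and connected
    intro E hE
    obtain ⟨C, hCs, rfl⟩ := Finset.mem_image.mp hE
    obtain ⟨x, hx, y, hy, hxy⟩ := hypF_two hT.1 ((hmemS C).mp hCs)
    refine ⟨Finset.one_lt_card.mpr ⟨x, hx, y, hy, hxy⟩, ?_⟩
    rw [connected_iff]
    refine ⟨?_, ⟨⟨x, Finset.mem_coe.mpr hx⟩⟩⟩
    rintro ⟨a, ha⟩ ⟨b, hb⟩
    obtain ⟨p⟩ := hypF_reach hT.1 C a (Finset.mem_coe.mp ha) b (Finset.mem_coe.mp hb)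
    exact reachable_induce (midGraph_sub C) p ha hb
  · -- coverage of non-adjacent pairs
    intro u v huv hnadj
    obtain ⟨p, hcompat⟩ := hT.2 u v
    have hL : p.support.length = p.length + 1 := Walk.length_support p
    have hn2 : 2 ≤ p.length := by
      clear hcompat hL
      cases p with
      | nil => exact absurd rfl huv
      | cons h q =>
        cases q with
        | nil => exact absurd h hnadj
        | cons h' q' => simp only [Walk.length_cons]; omega
    set w : ℕ → V := fun i => p.support.getD i u with hwdef
    have hwi : ∀ i (h : i < p.support.length), w i = p.support[i]'h := by
      intro i h
      rw [hwdef]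
      exact List.getD_eq_getElem _ _ h
    have hchain : ∀ i, i + 1 < p.support.length → G.Adj (w i) (w (i + 1)) := by
      have hcn := p.isChain_adj_support
      rw [List.isChain_iff_getElem] at hcn
      intro i hi
      have := hcn i (by omega)
      rw [hwi i (by omega), hwi (i + 1) hi]
      exact this
    have hcompat' : ∀ i, i + 2 < p.support.length →
        w i = w (i + 2) ∨ transitionOf (w i) (w (i + 1)) (w (i + 2)) ∈ T := by
      intro i hi
      have := hcompat i hi
      rw [hwi i (by omega), hwi (i + 1) (by omega), hwi (i + 2) hi]
      exact this
    have hw0 : w 0 = u := by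
      rw [hwi 0 (by omega), List.getElem_zero, p.head_support]
    have hwlast : w (p.support.length - 1) = v := by
      rw [hwi (p.support.length - 1) (by omega), ← List.getLast_eq_getElem, p.getLast_support]
      exact p.support_ne_nil
    -- there is a genuine transition somewhere on the walk
    have hex : ∃ j, j + 2 < p.support.length ∧ w j ≠ w (j + 2) := by
      by_contra hcon
      push_neg at hcon
      have hper : ∀ i, i < p.support.length → w i = w (i % 2) := by
        intro i
        induction i using Nat.strong_induction_on with
        | _ i ih =>
          intro hi
          rcases Nat.lt_or_ge i 2 with h2 | h2
          · rw [Nat.mod_eq_of_lt h2]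
          · obtain ⟨k, rfl⟩ : ∃ k, i = k + 2 := ⟨i - 2, by omega⟩
            have h1 := hcon k (by omega)
            have h3 := ih k (by omega) (by omega)
            have h4 : (k + 2) % 2 = k % 2 := by omega
            rw [← h1, h3, h4]
      have hv1 := hper (p.support.length - 1) (by omega)
      rcases Nat.mod_two_eq_zero_or_one (p.support.length - 1) with h0 | h1
      · rw [h0, hw0] at hv1
        exact huv (hv1 ▸ hwlast.symm).symm
      · rw [h1] at hv1
        have : G.Adj (w 0) (w 1) := hchain 0 (by omega)
        rw [hw0, ← hv1, hwlast] at this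
        exact hnadj this
    obtain ⟨j, hj2, hjne⟩ := hex
    -- all walk edges lie in one component of the transition graph
    have hreach : ∀ i, i + 1 < p.support.length →
        (transGraph T).Reachable s(w 0, w 1) s(w i, w (i + 1)) := by
      intro i
      induction i with
      | zero => intro _; exact Reachable.refl _
      | succ k ihk =>
        intro hk
        refine (ihk (by omega)).trans ?_
        rcases hcompat' k (by omega) with hb | ht
        · have he : s(w (k + 1), w (k + 1 + 1)) = s(w k, w (k + 1)) := by
            rw [show k + 1 + 1 = k + 2 from rfl, ← hb, Sym2.eq_swap]
          rw [he]
        · by_cases heq : s(w k, w (k + 1)) = s(w (k + 1), w (k + 1 + 1))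
          · rw [← heq]
          · exact Adj.reachable ⟨heq, ht⟩
    have hadjj : (transGraph T).Adj s(w j, w (j + 1)) s(w (j + 1), w (j + 2)) := by
      constructor
      · intro heq
        rw [Sym2.eq_iff] at heq
        rcases heq with ⟨h1, h2⟩ | ⟨h1, h2⟩
        · exact G.ne_of_adj (hchain j (by omega)) h1
        · exact hjne h1
      · rcases hcompat' j hj2 with hb | ht
        · exact absurd hb hjne
        · exact ht
    set C := (transGraph T).connectedComponentMk s(w 0, w 1) with hC
    have hmem : ∀ i, i + 1 < p.support.length → s(w i, w (i + 1)) ∈ C.supp := by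
      intro i hi
      rw [ConnectedComponent.mem_supp_iff, hC]
      exact (ConnectedComponent.eq.mpr (hreach i hi)).symm
    have hCs : C ∈ s :=
      (hmemS C).mpr ⟨s(w j, w (j + 1)), s(w (j + 1), w (j + 2)), hmem j (by omega), hadjj⟩
    refine ⟨hypF G T C, Finset.mem_image_of_mem _ hCs, ?_, ?_⟩
    · refine mem_hypF.mpr ⟨s(w 0, w 1), hmem 0 (by omega), ?_, ?_⟩
      · rw [← hw0]; exact Sym2.mem_mk_left _ _
      · exact G.mem_edgeSet.mpr (hchain 0 (by omega))
    · have hlt : p.support.length - 2 + 1 < p.support.length := by omega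
      refine mem_hypF.mpr ⟨s(w (p.support.length - 2), w (p.support.length - 2 + 1)),
        hmem _ hlt, ?_, ?_⟩
      · have : p.support.length - 2 + 1 = p.support.length - 1 := by omega
        rw [this, hwlast]
        exact Sym2.mem_mk_right _ _
      · exact G.mem_edgeSet.mpr (hchain _ hlt)
  · -- cost bound
    calc hcost (s.image (hypF G T)) ≤ ∑ C ∈ s, ((hypF G T C).card - 2) :=
          sum_image_le_nat s (hypF G T) (fun E => E.card - 2)
      _ ≤ ∑ C ∈ s, (T.filter
            (fun t => ∀ x ∈ t, (transGraph T).connectedComponentMk x = C)).card := by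
          refine Finset.sum_le_sum ?_
          intro C hC
          have := hypF_card_le hT.1 ((hmemS C).mp hC)
          omega
      _ ≤ T.card := by
          refine sum_filter_card_le s T _ ?_
          intro a _ b _ hab t _ h1 h2
          have hex : ∃ x, x ∈ t := by
            induction t using Sym2.ind with
            | _ a b => exact ⟨a, Sym2.mem_mk_left a b⟩
          obtain ⟨x, hx⟩ := hex
          exact hab ((h1 x hx).symm.trans (h2 x hx))
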